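/- Define η_{u,w} = #{T ⊆ [n] : T ∈ b[I^w], [n]\T ∈ b[I^w], Λ(T) = S_u} for cd-words u, w of degree n with S_u = {u_1 < ... < u_m}, u_0 = 0, u_{m+1} = n+2. Then η_{u,w} = 0 if |S_w ∩ (u_i, u_{i+1})| > 1 for some i; otherwise η_{u,w} = Π (u_{i+1} − u_i − 1), the product over those 0 ≤ i ≤ m with S_w ∩ (u_i, u_{i+1}) = ∅ (empty product = 1). -/

import Mathlib

/-- The degree of a cd-word (`false` = c, degree 1; `true` = d, degree 2). -/
def degw (w : List Bool) : ℕ := (w.map (fun b => if b then 2 else 1)).sum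

/-- The left sparse set `S_w` of a cd-word: degrees of prefixes ending at each d. -/
def Sw (w : List Bool) : Finset ℕ :=
  ((Finset.range w.length).filter (fun j => w.getD j false = true)).image
    (fun j => degw (w.take (j + 1)))

/-- `T ∈ b[I^w]`: `T` meets every interval `{i-1, i}` with `i ∈ S_w`. -/
def blocks (w : List Bool) (T : Finset ℕ) : Prop := ∀ i ∈ Sw w, i - 1 ∈ T ∨ i ∈ T

instance (w : List Bool) (T : Finset ℕ) : Decidable (blocks w T) := by
  unfold blocks; infer_instance

/-- `Λ(T) = {i ∈ T : i ≠ 1, i-1 ∉ T}`. -/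
def Lam (T : Finset ℕ) : Finset ℕ := T.filter (fun i => i ≠ 1 ∧ i - 1 ∉ T)

/-- `η_{u,w} = #{T ⊆ [n] : T ∈ b[I^w], [n]\T ∈ b[I^w], Λ(T) = S_u}`. -/
def eta (n : ℕ) (u w : List Bool) : ℕ :=
  ((Finset.Icc 1 n).powerset.filter
    (fun T => blocks w T ∧ blocks w (Finset.Icc 1 n \ T) ∧ Lam T = Sw u)).card


open Finset

lemma degw_append (a b : List Bool) : degw (a ++ b) = degw a + degw b := by
  simp [degw]

lemma degw_take_succ (u : List Bool) (j : ℕ) (hj : j < u.length) :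
    degw (u.take (j + 1)) = degw (u.take j) + (if u.getD j false then 2 else 1) := by
  rw [List.take_succ, degw_append]
  simp [List.getD, List.getElem?_eq_getElem hj, degw]

lemma degw_take_le_take (u : List Bool) {j k : ℕ} (h : j ≤ k) :
    degw (u.take j) ≤ degw (u.take k) := by
  have : u.take k = u.take j ++ (u.take k).drop j := by
    rw [List.drop_take]
    rw [← List.take_append_drop j (u.take k), List.take_take, min_eq_left h, List.drop_take]
  rw [this, degw_append]; omega

lemma degw_take_le (u : List Bool) (k : ℕ) : degw (u.take k) ≤ degw u := by
  conv_rhs => rw [← List.take_append_drop k u]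
  rw [degw_append]; omega

lemma mem_Sw {u : List Bool} {x : ℕ} (hx : x ∈ Sw u) : 2 ≤ x ∧ x ≤ degw u := by
  simp only [Sw, mem_image, mem_filter, Finset.mem_range] at hx
  obtain ⟨j, ⟨hj, hd⟩, rfl⟩ := hx
  have h1 := degw_take_succ u j hj
  rw [hd] at h1
  simp only [if_true] at h1
  exact ⟨by omega, degw_take_le u _⟩

lemma Sw_sparse {u : List Bool} {x y : ℕ} (hx : x ∈ Sw u) (hy : y ∈ Sw u) (h : x < y) :
    x + 2 ≤ y := by
  simp only [Sw, mem_image, mem_filter, Finset.mem_range] at hx hy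
  obtain ⟨j, ⟨hj, hdj⟩, rfl⟩ := hx
  obtain ⟨k, ⟨hk, hdk⟩, rfl⟩ := hy
  have hjk : j < k := by
    by_contra hc
    exact absurd (degw_take_le_take u (by omega : k + 1 ≤ j + 1)) (by omega)
  have h1 := degw_take_succ u k hk
  rw [hdk] at h1
  simp only [if_true] at h1
  have h2 : degw (u.take (j+1)) ≤ degw (u.take k) := degw_take_le_take u (by omega)
  omega


def cross (W : Finset ℕ) (T : Finset ℕ) : Prop := ∀ i ∈ W, ((i - 1 ∈ T) ↔ i ∉ T)

instance (W T : Finset ℕ) : Decidable (cross W T) := by unfold cross; infer_instance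

lemma Lam_subset (T : Finset ℕ) : Lam T ⊆ T := Finset.filter_subset _ _

def cset (N : ℕ) (l : List ℕ) (W : Finset ℕ) : Finset (Finset ℕ) :=
  (Finset.Icc 1 N).powerset.filter (fun T => cross W T ∧ Lam T = l.toFinset)

def gcount (W : Finset ℕ) (p : ℕ × ℕ) : ℕ :=
  ((Finset.Icc p.1 (p.2 - 2)).filter (fun t => ∀ i ∈ W, p.1 < i → i < p.2 → t = i - 1)).card

lemma Lam_union_Icc {T' : Finset ℕ} {a t : ℕ} (hT' : T' ⊆ Icc 1 (a - 2)) (ha : 2 ≤ a)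
    (hat : a ≤ t) : Lam (T' ∪ Icc a t) = insert a (Lam T') := by
  ext i
  simp only [Lam, mem_filter, mem_union, mem_insert, mem_Icc]
  constructor
  · rintro ⟨hi | hi, h1, h2⟩
    · have hb := mem_Icc.1 (hT' hi)
      right
      refine ⟨hi, h1, fun hc => h2 (Or.inl hc)⟩
    · rcases eq_or_lt_of_le hi.1 with rfl | hlt
      · exact Or.inl rfl
      · exact absurd (Or.inr ⟨by omega, by omega⟩) h2
  · rintro (rfl | hi)
    · refine ⟨Or.inr ⟨le_refl _, hat⟩, by omega, ?_⟩
      rintro (hc | hc)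
      · have := mem_Icc.1 (hT' hc); omega
      · omega
    · have hb := mem_Icc.1 (hT' hi.1)
      refine ⟨Or.inl hi.1, hi.2.1, ?_⟩
      rintro (hc | hc)
      · exact hi.2.2 hc
      · omega

lemma Lam_empty_initial {T : Finset ℕ} {N : ℕ} (hT : T ⊆ Icc 1 N) (h : Lam T = ∅) :
    T = Icc 1 (T.sup id) := by
  have hstep : ∀ i ∈ T, i = 1 ∨ i - 1 ∈ T := by
    intro i hi
    by_contra hc
    push_neg at hc
    have : i ∈ Lam T := by simp [Lam, mem_filter, hi, hc.1, hc.2]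
    rw [h] at this; exact absurd this (notMem_empty i)
  have claim : ∀ d, ∀ i ∈ T, 1 ≤ i - d → i - d ∈ T := by
    intro d
    induction d with
    | zero => intro i hi _; simpa using hi
    | succ d ih =>
      intro i hi hd
      have h1 : i - d ∈ T := ih i hi (by omega)
      rcases hstep _ h1 with h2 | h2
      · omega
      · have : i - (d + 1) = i - d - 1 := by omega
        rw [this]; exact h2
  rcases T.eq_empty_or_nonempty with rfl | hne
  · simp
  · obtain ⟨b, hb, hbe⟩ := Finset.exists_mem_eq_sup T hne id
    ext x
    simp only [mem_Icc]
    constructor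
    · intro hx
      exact ⟨(mem_Icc.1 (hT hx)).1, Finset.le_sup (f := id) hx⟩
    · rintro ⟨hx1, hx2⟩
      simp only [id] at hbe
      have := claim (T.sup id - x) b hb (by omega)
      have hxe : b - (T.sup id - x) = x := by omega
      rwa [hxe] at this

lemma sup_id_Icc_one (t : ℕ) : (Icc 1 t).sup id = t := by
  rcases Nat.eq_zero_or_pos t with rfl | ht
  · simp
  · apply le_antisymm
    · exact Finset.sup_le fun i hi => (mem_Icc.1 hi).2
    · exact Finset.le_sup (f := id) (mem_Icc.2 ⟨ht, le_refl t⟩)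

lemma mem_cset {N : ℕ} {l : List ℕ} {W T : Finset ℕ} :
    T ∈ cset N l W ↔ T ⊆ Icc 1 N ∧ cross W T ∧ Lam T = l.toFinset := by
  simp [cset, Finset.mem_filter, Finset.mem_powerset, and_assoc]

lemma cset_nil (N : ℕ) (W : Finset ℕ) (hW : W ⊆ Icc 2 (N + 1)) :
    (cset N [] W).card = gcount W (0, N + 2) := by
  unfold gcount
  apply Finset.card_nbij' (fun T => T.sup id) (fun t => Icc 1 t)
  · intro T hT
    rw [Finset.mem_coe, mem_cset] at hT
    obtain ⟨hsub, hcr, hlam⟩ := hT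
    have hTe := Lam_empty_initial hsub (by simpa using hlam)
    simp only [Finset.mem_coe, Finset.mem_filter, mem_Icc]
    refine ⟨⟨Nat.zero_le _, Finset.sup_le fun i hi => (mem_Icc.1 (hsub hi)).2⟩, ?_⟩
    intro i hi _ _
    have hiW := mem_Icc.1 (hW hi)
    have := hcr i hi
    rw [hTe] at this
    simp only [mem_Icc] at this
    omega
  · intro t ht
    simp only [Finset.mem_coe, Finset.mem_filter, mem_Icc] at ht
    rw [Finset.mem_coe, mem_cset]
    refine ⟨Icc_subset_Icc le_rfl ht.1.2, ?_, ?_⟩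
    · intro i hi
      have hiW := mem_Icc.1 (hW hi)
      have := ht.2 i hi (by omega) (by omega)
      simp only [mem_Icc]
      omega
    · simp only [List.toFinset_nil]
      rw [Finset.eq_empty_iff_forall_notMem]
      intro i
      simp only [Lam, Finset.mem_filter, mem_Icc]
      omega
  · intro T hT
    rw [Finset.mem_coe, mem_cset] at hT
    exact (Lam_empty_initial hT.1 (by simpa using hT.2.2)).symm
  · intro t _
    exact sup_id_Icc_one t

lemma insert_right_injective {a : ℕ} {s t : Finset ℕ} (hs : a ∉ s) (ht : a ∉ t)
    (h : insert a s = insert a t) : s = t := by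
  ext x
  by_cases hx : x = a
  · subst hx; simp [hs, ht]
  · constructor
    · intro hxs
      have : x ∈ insert a t := h ▸ mem_insert_of_mem hxs
      rcases mem_insert.1 this with h' | h'
      · exact absurd h' hx
      · exact h'
    · intro hxt
      have : x ∈ insert a s := h.symm ▸ mem_insert_of_mem hxt
      rcases mem_insert.1 this with h' | h'
      · exact absurd h' hx
      · exact h'

lemma cset_decomp {N a : ℕ} {l' : List ℕ} {W T : Finset ℕ}
    (ha2 : 2 ≤ a) (hl' : ∀ x ∈ l', x + 2 ≤ a)
    (hT : T ∈ cset N (l' ++ [a]) W) :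
    a ∈ T ∧ a - 1 ∉ T ∧ a ≤ T.sup id ∧ T.sup id ≤ N ∧
      (∀ x, a ≤ x → x ≤ T.sup id → x ∈ T) ∧
      T = (T ∩ Icc 1 (a - 2)) ∪ Icc a (T.sup id) := by
  rw [mem_cset] at hT
  obtain ⟨hsub, hcr, hlam⟩ := hT
  have hlam' : Lam T = insert a l'.toFinset := by
    rw [hlam]; ext x; simp [or_comm]
  have haLam : a ∈ Lam T := by rw [hlam']; exact mem_insert_self a _
  simp only [Lam, Finset.mem_filter] at haLam
  obtain ⟨haT, _, haT'⟩ := haLam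
  have hat : a ≤ T.sup id := Finset.le_sup (f := id) haT
  have htN : T.sup id ≤ N := Finset.sup_le fun i hi => (mem_Icc.1 (hsub hi)).2
  have hrun : ∀ x, a ≤ x → x ≤ T.sup id → x ∈ T := by
    intro x hax hxt
    by_contra hx
    obtain ⟨b, hb, hbe⟩ := Finset.exists_mem_eq_sup T ⟨a, haT⟩ id
    simp only [id] at hbe
    have hxb : x < b := by
      rcases lt_or_eq_of_le (hbe ▸ hxt) with h | h
      · exact h
      · exact absurd (h ▸ hb) hx
    have hSne : (T.filter (x < ·)).Nonempty := ⟨b, Finset.mem_filter.2 ⟨hb, hxb⟩⟩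
    set y := (T.filter (x < ·)).min' hSne with hy
    have hyS := (T.filter (x < ·)).min'_mem hSne
    simp only [Finset.mem_filter] at hyS
    have hy1 : y - 1 ∉ T := by
      intro hc
      rcases eq_or_lt_of_le (Nat.succ_le_of_lt hyS.2) with h | h
      · have hyx : y - 1 = x := by omega
        exact hx (hyx ▸ hc)
      · have : y - 1 ∈ T.filter (x < ·) := Finset.mem_filter.2 ⟨hc, by omega⟩
        have := (T.filter (x < ·)).min'_le _ this
        omega
    have hyLam : y ∈ Lam T := by
      simp only [Lam, Finset.mem_filter]
      exact ⟨hyS.1, by omega, hy1⟩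
    rw [hlam'] at hyLam
    rcases mem_insert.1 hyLam with h | h
    · omega
    · have := hl' y (List.mem_toFinset.1 h); omega
  refine ⟨haT, haT', hat, htN, hrun, ?_⟩
  ext x
  simp only [mem_union, Finset.mem_inter, mem_Icc]
  constructor
  · intro hx
    have hb := mem_Icc.1 (hsub hx)
    have hxt : x ≤ T.sup id := Finset.le_sup (f := id) hx
    by_cases hxa : a ≤ x
    · exact Or.inr ⟨hxa, hxt⟩
    · have : x ≠ a - 1 := fun h => haT' (h ▸ hx)
      exact Or.inl ⟨hx, hb.1, by omega⟩
  · rintro (⟨hx, _⟩ | ⟨h1, h2⟩)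
    · exact hx
    · exact hrun x h1 h2

lemma cset_step (N a : ℕ) (l' : List ℕ) (W : Finset ℕ)
    (hW : W ⊆ Icc 2 (N + 1)) (ha2 : 2 ≤ a) (haN : a ≤ N)
    (hl' : ∀ x ∈ l', x + 2 ≤ a) :
    (cset N (l' ++ [a]) W).card
      = (cset (a - 2) l' (W.filter (· < a))).card * gcount W (a, N + 2) := by
  have hgc : ((Icc a (N + 2 - 2)).filter
      (fun t => ∀ i ∈ W, a < i → i < N + 2 → t = i - 1))
      = (Icc a N).filter (fun t => ∀ i ∈ W, a < i → t = i - 1) := by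
    have : N + 2 - 2 = N := by omega
    rw [this]
    apply Finset.filter_congr
    intro t _
    constructor
    · intro h i hi hai
      have := mem_Icc.1 (hW hi)
      exact h i hi hai (by omega)
    · intro h i hi hai _
      exact h i hi hai
  unfold gcount
  simp only at hgc ⊢
  rw [hgc, ← Finset.card_product]
  set A := (Icc a N).filter (fun t => ∀ i ∈ W, a < i → t = i - 1) with hA
  set W' := W.filter (· < a) with hW'
  apply Finset.card_nbij' (fun T => (T ∩ Icc 1 (a - 2), T.sup id))
    (fun q => q.1 ∪ Icc a q.2)
  · -- forward membership
    intro T hT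
    obtain ⟨haT, haT', hat, htN, hrun, hdec⟩ := cset_decomp ha2 hl' hT
    rw [Finset.mem_coe, mem_cset] at hT
    obtain ⟨hsub, hcr, hlam⟩ := hT
    have hT'sub : T ∩ Icc 1 (a - 2) ⊆ Icc 1 (a - 2) := Finset.inter_subset_right
    rw [Finset.mem_coe, Finset.mem_product]
    constructor
    · rw [mem_cset]
      refine ⟨hT'sub, ?_, ?_⟩
      · -- cross W' T'
        intro i hi
        rw [hW', Finset.mem_filter] at hi
        obtain ⟨hiW, hia⟩ := hi
        have hib := mem_Icc.1 (hW hiW)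
        have hc := hcr i hiW
        have hm1 : i - 1 ∈ T ∩ Icc 1 (a - 2) ↔ i - 1 ∈ T := by
          simp only [Finset.mem_inter, mem_Icc]
          constructor
          · exact fun h => h.1
          · intro h; exact ⟨h, by omega, by omega⟩
        by_cases hia' : i = a - 1
        · have hiT : i ∉ T := by rw [← hia']  at haT'; exact haT'
          have hiT' : i ∉ T ∩ Icc 1 (a - 2) := by
            simp only [Finset.mem_inter, mem_Icc]; omega
          rw [hm1]
          simp only [hiT', hiT] at hc ⊢
          tauto
        · have hm2 : i ∈ T ∩ Icc 1 (a - 2) ↔ i ∈ T := by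
            simp only [Finset.mem_inter, mem_Icc]
            constructor
            · exact fun h => h.1
            · intro h; exact ⟨h, by omega, by omega⟩
          rw [hm1, hm2]; exact hc
      · -- Lam
        have := Lam_union_Icc hT'sub ha2 hat
        rw [← hdec] at this
        rw [hlam] at this
        have hins : (l' ++ [a]).toFinset = insert a l'.toFinset := by
          ext x; simp [or_comm]
        rw [hins] at this
        apply insert_right_injective _ _ this.symm
        · intro hc
          have := mem_Icc.1 (hT'sub (Lam_subset _ hc)); omega
        · intro hc
          have := hl' a (List.mem_toFinset.1 hc); omega
    · rw [hA, Finset.mem_filter, mem_Icc]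
      refine ⟨⟨hat, htN⟩, ?_⟩
      intro i hi hai
      have hib := mem_Icc.1 (hW hi)
      have hc := hcr i hi
      have h1 : i - 1 ∈ T ↔ i - 1 ≤ T.sup id := by
        constructor
        · exact fun h => Finset.le_sup (f := id) h
        · exact fun h => hrun _ (by omega) h
      have h2 : i ∈ T ↔ i ≤ T.sup id := by
        constructor
        · exact fun h => Finset.le_sup (f := id) h
        · exact fun h => hrun _ (by omega) h
      rw [h1, h2] at hc
      dsimp only
      omega
  · -- backward membership
    rintro ⟨T', t⟩ hq
    rw [Finset.mem_coe, Finset.mem_product] at hq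
    obtain ⟨hT', htA⟩ := hq
    rw [mem_cset] at hT'
    obtain ⟨hsub', hcr', hlam'⟩ := hT'
    rw [hA, Finset.mem_filter, mem_Icc] at htA
    obtain ⟨⟨hat, htN⟩, htc⟩ := htA
    rw [Finset.mem_coe, mem_cset]
    refine ⟨?_, ?_, ?_⟩
    · intro x hx
      rcases mem_union.1 hx with h | h
      · have := mem_Icc.1 (hsub' h); rw [mem_Icc]; omega
      · have := mem_Icc.1 h; rw [mem_Icc]; omega
    · intro i hi
      have hib := mem_Icc.1 (hW hi)
      simp only [mem_union, mem_Icc]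
      rcases lt_trichotomy i a with hia | hia | hia
      · have hc := hcr' i (by rw [hW', Finset.mem_filter]; exact ⟨hi, by simpa using hia⟩)
        have hb1 : i - 1 ∈ T' → i - 1 ∈ T' := id
        have hn1 : ¬ (a ≤ i - 1 ∧ i - 1 ≤ t) := by omega
        have hn2 : ¬ (a ≤ i ∧ i ≤ t) := by omega
        constructor
        · rintro (h | h)
          · intro hc2
            rcases hc2 with h2 | h2
            · exact (hc.1 h) h2
            · exact hn2 h2
          · exact absurd h hn1
        · intro h
          left
          apply hc.2
          intro hc2
          exact h (Or.inl hc2)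
      · have h1 : i - 1 ∉ T' := by
          intro hc; have := mem_Icc.1 (hsub' hc); omega
        constructor
        · rintro (h | h)
          · exact absurd h h1
          · exact absurd h (by omega)
        · intro h
          exact absurd (Or.inr ⟨by omega, by omega⟩) h
      · have hte := htc i hi hia
        have h1 : i - 1 ∉ T' := by
          intro hc; have := mem_Icc.1 (hsub' hc); omega
        have h2 : i ∉ T' := by
          intro hc; have := mem_Icc.1 (hsub' hc); omega
        constructor
        · rintro (h | h)
          · exact absurd h h1
          · rintro (h2' | h2')
            · exact h2 h2'
            · omega
        · intro _
          right; omega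
    · rw [Lam_union_Icc hsub' ha2 hat, hlam']
      ext x; simp [or_comm]
  · -- left inverse
    intro T hT
    exact (cset_decomp ha2 hl' hT).2.2.2.2.2.symm
  · -- right inverse
    rintro ⟨T', t⟩ hq
    rw [Finset.mem_coe, Finset.mem_product] at hq
    obtain ⟨hT', htA⟩ := hq
    rw [mem_cset] at hT'
    obtain ⟨hsub', _, _⟩ := hT'
    rw [hA, Finset.mem_filter, mem_Icc] at htA
    obtain ⟨⟨hat, htN⟩, _⟩ := htA
    have h1 : (T' ∪ Icc a t) ∩ Icc 1 (a - 2) = T' := by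
      ext x
      simp only [Finset.mem_inter, mem_union, mem_Icc]
      constructor
      · rintro ⟨h | h, hb⟩
        · exact h
        · omega
      · intro hx
        have := mem_Icc.1 (hsub' hx)
        exact ⟨Or.inl hx, this.1, this.2⟩
    have h2 : (T' ∪ Icc a t).sup id = t := by
      apply le_antisymm
      · apply Finset.sup_le
        intro x hx
        rcases mem_union.1 hx with h | h
        · have := mem_Icc.1 (hsub' h); simp only [id]; omega
        · have := mem_Icc.1 h; simp only [id]; omega
      · exact Finset.le_sup (f := id) (mem_union.2 (Or.inr (mem_Icc.2 ⟨hat, le_rfl⟩)))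
    rw [Prod.mk.injEq]
    exact ⟨h1, h2⟩

def pairsOf (L : List ℕ) : List (ℕ × ℕ) := L.zip L.tail

lemma pairsOf_cons_cons (a b : ℕ) (L : List ℕ) :
    pairsOf (a :: b :: L) = (a, b) :: pairsOf (b :: L) := rfl

lemma pairsOf_append₂ : ∀ (K : List ℕ) (x y : ℕ),
    pairsOf (K ++ [x, y]) = pairsOf (K ++ [x]) ++ [(x, y)]
  | [], x, y => rfl
  | [k], x, y => rfl
  | k :: k' :: K, x, y => by
    have ih := pairsOf_append₂ (k' :: K) x y
    simp only [List.cons_append] at ih ⊢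
    rw [pairsOf_cons_cons, pairsOf_cons_cons, ih]
    rfl

lemma chain'_pairs {R : ℕ → ℕ → Prop} : ∀ {L : List ℕ}, List.Chain' R L →
    ∀ p ∈ pairsOf L, R p.1 p.2
  | [], _, p, hp => by simp [pairsOf] at hp
  | [a], _, p, hp => by simp [pairsOf] at hp
  | a :: b :: L, h, p, hp => by
    rw [pairsOf_cons_cons] at hp
    rcases List.mem_cons.1 hp with rfl | hp
    · exact (List.isChain_cons_cons.1 h).1
    · exact chain'_pairs (List.isChain_cons_cons.1 h).2 p hp

lemma mem_pairs_snd {L : List ℕ} {p : ℕ × ℕ} (hp : p ∈ pairsOf L) : p.2 ∈ L.tail := by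
  obtain ⟨x, y⟩ := p
  exact (List.of_mem_zip hp).2

lemma key : ∀ (l : List ℕ) (N : ℕ) (W : Finset ℕ),
    List.Chain' (fun x y => x + 2 ≤ y) (0 :: (l ++ [N + 2])) →
    W ⊆ Icc 2 (N + 1) →
    (cset N l W).card = ((pairsOf (0 :: (l ++ [N + 2]))).map (gcount W)).prod := by
  intro l
  induction l using List.reverseRecOn with
  | nil =>
    intro N W _ hW
    simp only [List.nil_append]
    rw [cset_nil N W hW]
    simp [pairsOf]
  | append_singleton l' a ih =>
    intro N W hchain hW
    haveI : IsTrans ℕ (fun x y => x + 2 ≤ y) := ⟨fun a b c h1 h2 => by omega⟩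
    have hpw := List.isChain_iff_pairwise.1 hchain
    have hLeq : 0 :: (l' ++ [a] ++ [N + 2]) = (0 :: l') ++ [a, N + 2] := by simp
    rw [List.pairwise_cons] at hpw
    have hpw2 := hpw.2
    have hsplit := (List.pairwise_append.1 (by simpa using hpw2 :
        List.Pairwise (fun x y => x + 2 ≤ y) (l' ++ [a, N + 2])))
    have hl' : ∀ x ∈ l', x + 2 ≤ a := fun x hx =>
      hsplit.2.2 x hx a (by simp)
    have ha2 : 2 ≤ a := by
      have := hpw.1 a (by simp)
      omega
    have haN : a ≤ N := by
      have := List.pairwise_cons.1 hsplit.2.1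
      have := this.1 (N + 2) (by simp)
      omega
    have haa : a - 2 + 2 = a := by omega
    have hchainL : List.Chain' (fun x y => x + 2 ≤ y) (0 :: (l' ++ [a - 2 + 2])) := by
      rw [haa]
      have : (0 :: (l' ++ [a] ++ [N + 2])) = (0 :: (l' ++ [a])) ++ [N + 2] := by simp
      rw [this] at hchain
      exact hchain.left_of_append
    have hW' : W.filter (· < a) ⊆ Icc 2 (a - 2 + 1) := by
      intro x hx
      rw [Finset.mem_filter] at hx
      have := mem_Icc.1 (hW hx.1)
      rw [mem_Icc]
      have := hx.2
      omega
    have hih := ih (a - 2) (W.filter (· < a)) hchainL hW'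
    rw [cset_step N a l' W hW ha2 haN hl', hih]
    rw [haa]
    have hsnd : ∀ p ∈ pairsOf (0 :: (l' ++ [a])), gcount (W.filter (· < a)) p = gcount W p := by
      intro p hp
      have hp2 : p.2 ∈ l' ++ [a] := mem_pairs_snd hp
      have hp2a : p.2 ≤ a := by
        rcases List.mem_append.1 hp2 with h | h
        · have := hl' _ h; omega
        · simp at h; omega
      unfold gcount
      congr 1
      apply Finset.filter_congr
      intro t _
      constructor
      · intro h i hi h1 h2
        exact h i (Finset.mem_filter.2 ⟨hi, by omega⟩) h1 h2
      · intro h i hi h1 h2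
        exact h i (Finset.mem_filter.1 hi).1 h1 h2
    rw [hLeq, pairsOf_append₂ (0 :: l') a (N + 2), List.map_append, List.prod_append]
    have : (0 :: l') ++ [a] = 0 :: (l' ++ [a]) := by simp
    rw [this, List.map_congr_left hsnd]
    simp

lemma gcount_eval {W : Finset ℕ} {p : ℕ × ℕ} (h : p.1 + 2 ≤ p.2) :
    gcount W p = if (Ioo p.1 p.2 ∩ W) = ∅ then p.2 - p.1 - 1
      else if (Ioo p.1 p.2 ∩ W).card = 1 then 1 else 0 := by
  obtain ⟨x, y⟩ := p
  simp only at h ⊢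
  unfold gcount
  simp only
  by_cases he : Ioo x y ∩ W = ∅
  · rw [if_pos he]
    have hfilt : ∀ t ∈ Icc x (y - 2), ∀ i ∈ W, x < i → i < y → t = i - 1 := by
      intro t _ i hi h1 h2
      exfalso
      have : i ∈ Ioo x y ∩ W := Finset.mem_inter.2 ⟨mem_Ioo.2 ⟨h1, h2⟩, hi⟩
      rw [he] at this
      exact notMem_empty i this
    rw [Finset.filter_true_of_mem hfilt, Nat.card_Icc]
    omega
  · rw [if_neg he]
    by_cases h1 : (Ioo x y ∩ W).card = 1
    · rw [if_pos h1]
      obtain ⟨i0, hi0⟩ := Finset.card_eq_one.1 h1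
      have hi0m : i0 ∈ Ioo x y ∩ W := hi0 ▸ Finset.mem_singleton_self i0
      rw [Finset.mem_inter, mem_Ioo] at hi0m
      have : (Icc x (y - 2)).filter (fun t => ∀ i ∈ W, x < i → i < y → t = i - 1)
          = {i0 - 1} := by
        ext t
        simp only [Finset.mem_filter, mem_Icc, Finset.mem_singleton]
        constructor
        · rintro ⟨_, hall⟩
          exact hall i0 hi0m.2 hi0m.1.1 hi0m.1.2
        · rintro rfl
          refine ⟨⟨by omega, by omega⟩, ?_⟩
          intro i hi ha hb
          have : i ∈ Ioo x y ∩ W := Finset.mem_inter.2 ⟨mem_Ioo.2 ⟨ha, hb⟩, hi⟩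
          rw [hi0] at this
          have := Finset.mem_singleton.1 this
          omega
      rw [this, Finset.card_singleton]
    · rw [if_neg h1]
      have h2 : 1 < (Ioo x y ∩ W).card := by
        have h0 : (Ioo x y ∩ W).card ≠ 0 := fun hc => he (Finset.card_eq_zero.1 hc)
        omega
      obtain ⟨i1, hi1, i2, hi2, hne⟩ := Finset.one_lt_card.1 h2
      rw [Finset.mem_inter, mem_Ioo] at hi1 hi2
      have : (Icc x (y - 2)).filter (fun t => ∀ i ∈ W, x < i → i < y → t = i - 1) = ∅ := by
        rw [Finset.eq_empty_iff_forall_notMem]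
        intro t ht
        rw [Finset.mem_filter] at ht
        have e1 := ht.2 i1 hi1.2 hi1.1.1 hi1.1.2
        have e2 := ht.2 i2 hi2.2 hi2.1.1 hi2.1.2
        have : i1 = i2 := by omega
        exact hne this
      rw [this, Finset.card_empty]

lemma list_prod_ite {α : Type*} (l : List α) (f g : α → ℕ) (P : α → Prop) [DecidablePred P]
    (h : ∀ x ∈ l, f x = if P x then g x else 1) :
    (l.map f).prod = ((l.filter (fun x => decide (P x))).map g).prod := by
  induction l with
  | nil => simp
  | cons a l ih =>
    have ha := h a List.mem_cons_self
    have hl := ih fun x hx => h x (List.mem_cons_of_mem a hx)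
    by_cases hP : P a
    · simp only [List.map_cons, List.prod_cons, ha, if_pos hP, hl,
        List.filter_cons, decide_eq_true hP]
      simp
    · simp only [List.map_cons, List.prod_cons, ha, if_neg hP, hl, List.filter_cons]
      simp [hP]

/-- with `S_u = {u_1 < … < u_m}`, `u_0 = 0`, `u_{m+1} = n+2`
(consecutive pairs of the sorted list `L`), `η_{u,w} = 0` if some open interval
`(u_i, u_{i+1})` contains more than one element of `S_w`, and otherwise equals
`Π (u_{i+1} - u_i - 1)` over those `i` with `S_w ∩ (u_i, u_{i+1}) = ∅`. -/
theorem stmt_13 (n : ℕ) (u w : List Bool) (hu : degw u = n) (hw : degw w = n) :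
    eta n u w =
      (let L := (insert 0 (insert (n + 2) (Sw u))).sort (· ≤ ·)
       let pairs := L.zip L.tail
       if ∃ p ∈ pairs, 1 < ((Finset.Ioo p.1 p.2) ∩ Sw w).card then 0
       else ((pairs.filter
           (fun p => decide ((Finset.Ioo p.1 p.2) ∩ Sw w = ∅))).map
           (fun p => p.2 - p.1 - 1)).prod) := by
  have hSu : ∀ x ∈ Sw u, 2 ≤ x ∧ x ≤ n := fun x hx => hu ▸ mem_Sw hx
  have hSw : ∀ x ∈ Sw w, 2 ≤ x ∧ x ≤ n := fun x hx => hw ▸ mem_Sw hx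
  set s := (Sw u).sort (· ≤ ·) with hs
  have hsmem : ∀ x ∈ s, x ∈ Sw u := fun x hx => (Finset.mem_sort _).1 hx
  -- the sorted list
  have hn2notin : n + 2 ∉ Sw u := fun hc => by have := hSu _ hc; omega
  have h0notin : (0 : ℕ) ∉ insert (n + 2) (Sw u) := by
    rw [Finset.mem_insert]
    rintro (h | h)
    · omega
    · have := hSu _ h; omega
  have hsort2 : (insert (n + 2) (Sw u)).sort (· ≤ ·) = s ++ [n + 2] := by
    have hperm : List.Perm ((insert (n + 2) (Sw u)).sort (· ≤ ·)) (s ++ [n + 2]) := by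
      refine ((Finset.sort_perm_toList _ (· ≤ ·)).trans
        ((Finset.toList_insert hn2notin).trans ?_))
      refine (List.Perm.cons _ (Finset.sort_perm_toList (Sw u) (· ≤ ·)).symm).trans ?_
      exact (List.perm_append_singleton _ _).symm
    refine List.Perm.eq_of_pairwise' (Finset.pairwise_sort _ _) ?_ hperm
    · rw [List.pairwise_append]
      refine ⟨Finset.pairwise_sort _ _, List.pairwise_singleton _ _, ?_⟩
      intro x hx y hy
      rw [List.mem_singleton] at hy
      subst hy
      have := hSu x (hsmem x hx)
      omega
  have hL : (insert 0 (insert (n + 2) (Sw u))).sort (· ≤ ·) = 0 :: (s ++ [n + 2]) := by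
    rw [Finset.sort_insert (h₁ := fun b _ => Nat.zero_le b) (h₂ := h0notin), hsort2]
  -- chain property
  have hchain : List.Chain' (fun x y => x + 2 ≤ y) (0 :: (s ++ [n + 2])) := by
    haveI : IsTrans ℕ (fun x y => x + 2 ≤ y) := ⟨fun a b c h1 h2 => by omega⟩
    refine List.isChain_iff_pairwise.2 ?_; rw [List.pairwise_cons]
    constructor
    · intro y hy
      rcases List.mem_append.1 hy with h | h
      · have := hSu y (hsmem y h); omega
      · rw [List.mem_singleton] at h; omega
    · rw [List.pairwise_append]
      refine ⟨?_, List.pairwise_singleton _ _, ?_⟩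
      · have hlt : List.Pairwise (· < ·) s := (Finset.sortedLT_sort _).pairwise
        exact hlt.imp_of_mem (fun hx hy hlt' => Sw_sparse (hsmem _ hx) (hsmem _ hy) hlt')
      · intro x hx y hy
        rw [List.mem_singleton] at hy
        subst hy
        have := hSu x (hsmem x hx)
        omega
  -- eta = cset card
  have heta : eta n u w = (cset n s (Sw w)).card := by
    unfold eta cset
    congr 1
    apply Finset.filter_congr
    intro T hT
    rw [Finset.mem_powerset] at hT
    have htf : s.toFinset = Sw u := Finset.sort_toFinset _ _
    rw [htf]
    constructor
    · rintro ⟨hb1, hb2, hlam⟩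
      refine ⟨?_, hlam⟩
      intro i hi
      have hib := hSw i hi
      have h1 := hb1 i hi
      have h2 := hb2 i hi
      rw [Finset.mem_sdiff, Finset.mem_sdiff, mem_Icc, mem_Icc] at h2
      constructor
      · intro hm1 hm2
        rcases h2 with ⟨_, h⟩ | ⟨_, h⟩
        · exact h hm1
        · exact h hm2
      · intro hm
        rcases h1 with h | h
        · exact h
        · exact absurd h hm
    · rintro ⟨hcr, hlam⟩
      have hcr' := hcr
      unfold cross at hcr'
      refine ⟨?_, ?_, hlam⟩
      · intro i hi
        have := hcr' i hi
        tauto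
      · intro i hi
        have hib := hSw i hi
        have := hcr' i hi
        rw [Finset.mem_sdiff, Finset.mem_sdiff, mem_Icc, mem_Icc]
        by_cases hm : i ∈ T
        · left
          refine ⟨⟨by omega, by omega⟩, ?_⟩
          intro hc
          exact (this.1 hc) hm
        · right
          exact ⟨⟨by omega, by omega⟩, hm⟩
  have hWsub : Sw w ⊆ Icc 2 (n + 1) := by
    intro x hx
    have := hSw x hx
    rw [mem_Icc]; omega
  have hkey := key s n (Sw w) hchain hWsub
  rw [heta, hkey]
  -- now the RHS
  simp only [hL]
  have hpairs : ∀ p ∈ pairsOf (0 :: (s ++ [n + 2])), p.1 + 2 ≤ p.2 :=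
    chain'_pairs hchain
  show (List.map (gcount (Sw w)) (pairsOf (0 :: (s ++ [n + 2])))).prod =
    (if ∃ p ∈ pairsOf (0 :: (s ++ [n + 2])), 1 < ((Ioo p.1 p.2) ∩ Sw w).card then 0
     else ((List.filter (fun p => decide (Ioo p.1 p.2 ∩ Sw w = ∅))
       (pairsOf (0 :: (s ++ [n + 2])))).map (fun p => p.2 - p.1 - 1)).prod)
  by_cases hex : ∃ p ∈ pairsOf (0 :: (s ++ [n + 2])), 1 < ((Ioo p.1 p.2) ∩ Sw w).card
  · rw [if_pos hex]
    obtain ⟨p, hp, hcard⟩ := hex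
    apply List.prod_eq_zero
    rw [List.mem_map]
    refine ⟨p, hp, ?_⟩
    rw [gcount_eval (hpairs p hp)]
    rw [if_neg, if_neg]
    · omega
    · intro hc
      rw [hc] at hcard
      simp at hcard
  · rw [if_neg hex]
    push_neg at hex
    apply list_prod_ite
    intro p hp
    rw [gcount_eval (hpairs p hp)]
    by_cases he : Ioo p.1 p.2 ∩ Sw w = ∅
    · rw [if_pos he, if_pos he]
    · rw [if_neg he, if_neg he]
      have h0 : (Ioo p.1 p.2 ∩ Sw w).card ≠ 0 := fun hc => he (Finset.card_eq_zero.1 hc)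
      have h2 := hex p hp
      rw [if_pos (by omega)]
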